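/- Let p be a prime and m ∈ ℕ. There exists N = N(m) ∈ ℕ such that p^N · M^{(m)} ⊆ A^{(m)}, i.e. for every d ∈ ℕ and every 0 ≤ k ≤ 2d the element p^N·(q^(m)_d!/d!)·x^k ξ^d of ℚ_p[x,ξ] lies in A^{(m)}. -/

import Mathlib

/-!
STATEMENT 11: Let `p` be prime and `m : ℕ`. There exists `N = N(m) : ℕ` such that
`p^N · M^{(m)} ⊆ A^{(m)}`, i.e. for every `d : ℕ` and every `0 ≤ k ≤ 2d` the
element `p^N·(q^(m)_d!/d!)·x^k ξ^d` of `ℚ_[p][x,ξ]` lies in `A^{(m)}`.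

Here, in `ℚ_[p][x,ξ]` (realized as `MvPolynomial (Fin 2) ℚ_[p]` with `x = X 0`,
`ξ = X 1`), `A^{(m)}` is the `ℤ_[p]`-subalgebra generated by the elements
`(q^(m)_ν!/ν!)·ξ^ν`, `(q^(m)_ν!/ν!)·(xξ)^ν`, `(q^(m)_ν!/ν!)·(x²ξ)^ν` (`ν : ℕ`),
and `M^{(m)}` is the `ℤ_[p]`-span of the elements `(q^(m)_d!/d!)·x^k ξ^d`
(`d : ℕ`, `0 ≤ k ≤ 2d`).
-/

noncomputable section

/-- `q^(m)_n = ⌊n / p^m⌋`. -/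
def qm (p m n : ℕ) : ℕ := n / p ^ m

/-- The scalar `q^(m)_ν! / ν!` in `ℚ_[p]`. -/
def cm (p : ℕ) [Fact p.Prime] (m ν : ℕ) : ℚ_[p] :=
  ((qm p m ν).factorial : ℚ_[p]) / (ν.factorial : ℚ_[p])

/-- The generators `(q^(m)_ν!/ν!)·(x^k ξ)^ν`, `k = 0, 1, 2`, of `A^{(m)}`. -/
def genA (p : ℕ) [Fact p.Prime] (m : ℕ) (g : Fin 3 × ℕ) :
    MvPolynomial (Fin 2) ℚ_[p] :=
  cm p m g.2 • ((MvPolynomial.X 0) ^ (g.1 : ℕ) * MvPolynomial.X 1) ^ g.2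

/-- `A^{(m)}`: the `ℤ_[p]`-subalgebra of `ℚ_[p][x,ξ]` generated by the elements
`genA`, realized as all `ℤ_[p]`-linear combinations of products of generators. -/
def Aset (p : ℕ) [Fact p.Prime] (m : ℕ) : Set (MvPolynomial (Fin 2) ℚ_[p]) :=
  {u | ∃ (s : Finset (List (Fin 3 × ℕ))) (a : List (Fin 3 × ℕ) → ℤ_[p]),
    u = ∑ w ∈ s, ((a w : ℚ_[p]) • (w.map (genA p m)).prod)}

/-- The spanning elements `(q^(m)_d!/d!)·x^k ξ^d` of `M^{(m)}`. -/
def genM (p : ℕ) [Fact p.Prime] (m d k : ℕ) : MvPolynomial (Fin 2) ℚ_[p] :=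
  cm p m d • ((MvPolynomial.X 0) ^ k * (MvPolynomial.X 1) ^ d)

section AuxLemmas
variable (p : ℕ) [Fact p.Prime]

-- pointwise division inequality
lemma div3_le {n a b c : ℕ} (hn : 0 < n) : (a + b + c) / n ≤ a / n + b / n + c / n + 2 := by
  have h : a + b + c < (a / n + b / n + c / n + 3) * n := by
    nlinarith [Nat.div_add_mod a n, Nat.div_add_mod b n, Nat.div_add_mod c n,
      Nat.mod_lt a hn, Nat.mod_lt b hn, Nat.mod_lt c hn]
  have := (Nat.div_lt_iff_lt_mul hn).mpr h
  omega

lemma qm_factorial_val (m ν : ℕ) :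
    padicValNat p (Nat.factorial ν) =
      (∑ i ∈ Finset.Ico 1 (m + 1), ν / p ^ i) + padicValNat p (Nat.factorial (qm p m ν)) := by
  have hp1 : 1 < p := (Fact.out : p.Prime).one_lt
  set B := Nat.log p ν + 1 with hB
  have h1 : Nat.log p ν < m + B := by omega
  have h2 : Nat.log p (qm p m ν) < B := by
    have : Nat.log p (qm p m ν) ≤ Nat.log p ν :=
      Nat.log_mono_right (Nat.div_le_self ν (p ^ m))
    omega
  rw [padicValNat_factorial (p := p) h1, padicValNat_factorial (p := p) h2]
  rw [← Finset.sum_Ico_consecutive (fun i => ν / p ^ i)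
    (by omega : 1 ≤ m + 1) (by omega : m + 1 ≤ m + B)]
  congr 1
  rw [Finset.sum_Ico_eq_sum_range, Finset.sum_Ico_eq_sum_range]
  have e1 : m + B - (m + 1) = B - 1 := by omega
  rw [e1]
  refine Finset.sum_congr rfl fun i _ => ?_
  show ν / p ^ (m + 1 + i) = qm p m ν / p ^ (1 + i)
  rw [show m + 1 + i = m + (1 + i) by omega, qm, Nat.div_div_eq_div_mul, ← pow_add]

lemma key_ineq (m a b c : ℕ) :
    padicValNat p (Nat.factorial (a + b + c)) + padicValNat p (Nat.factorial (qm p m a)) +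
      padicValNat p (Nat.factorial (qm p m b)) + padicValNat p (Nat.factorial (qm p m c)) ≤
    2 * m + padicValNat p (Nat.factorial (qm p m (a + b + c))) +
      padicValNat p (Nat.factorial a) + padicValNat p (Nat.factorial b) +
      padicValNat p (Nat.factorial c) := by
  have hp1 : 1 < p := (Fact.out : p.Prime).one_lt
  have hsum : (∑ i ∈ Finset.Ico 1 (m + 1), (a + b + c) / p ^ i) ≤
      (∑ i ∈ Finset.Ico 1 (m + 1), a / p ^ i) + (∑ i ∈ Finset.Ico 1 (m + 1), b / p ^ i) +
      (∑ i ∈ Finset.Ico 1 (m + 1), c / p ^ i) + 2 * m := by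
    calc (∑ i ∈ Finset.Ico 1 (m + 1), (a + b + c) / p ^ i)
        ≤ ∑ i ∈ Finset.Ico 1 (m + 1), (a / p ^ i + b / p ^ i + c / p ^ i + 2) :=
          Finset.sum_le_sum fun i _ => div3_le (Nat.pow_pos (n := i) (by omega))
      _ = _ := by
          simp [Finset.sum_add_distrib, Nat.card_Ico, mul_comm]
  have ha := qm_factorial_val p m a
  have hb := qm_factorial_val p m b
  have hc := qm_factorial_val p m c
  have hd := qm_factorial_val p m (a + b + c)
  omega
lemma main_mem (m a b c : ℕ) :
    ((p : ℚ_[p]) ^ (2 * m) • genM p m (a + b + c) (b + 2 * c)) ∈ Aset p m := by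
  have hp1 : 1 < p := (Fact.out : p.Prime).one_lt
  set Nn : ℕ := p ^ (2 * m) * (qm p m (a + b + c)).factorial * a.factorial * b.factorial
      * c.factorial with hNn
  set D : ℕ := (a + b + c).factorial * (qm p m a).factorial * (qm p m b).factorial
      * (qm p m c).factorial with hD
  have hNn0 : Nn ≠ 0 := by
    have : 0 < Nn := by
      rw [hNn]
      exact Nat.mul_pos (Nat.mul_pos (Nat.mul_pos (Nat.mul_pos
        (Nat.pow_pos (by omega)) (Nat.factorial_pos _)) (Nat.factorial_pos _))
        (Nat.factorial_pos _)) (Nat.factorial_pos _)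
    omega
  have hD0 : D ≠ 0 := by simp [hD, Nat.factorial_ne_zero]
  have hval : padicValNat p D ≤ padicValNat p Nn := by
    have e1 : padicValNat p Nn = 2 * m + padicValNat p (Nat.factorial (qm p m (a + b + c))) +
        padicValNat p (Nat.factorial a) + padicValNat p (Nat.factorial b) +
        padicValNat p (Nat.factorial c) := by
      rw [hNn, padicValNat.mul (by positivity) (Nat.factorial_ne_zero _),
        padicValNat.mul (by positivity) (Nat.factorial_ne_zero _),
        padicValNat.mul (by positivity) (Nat.factorial_ne_zero _),
        padicValNat.mul (by positivity) (Nat.factorial_ne_zero _),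
        padicValNat.prime_pow]
    have e2 : padicValNat p D = padicValNat p (Nat.factorial (a + b + c)) +
        padicValNat p (Nat.factorial (qm p m a)) + padicValNat p (Nat.factorial (qm p m b)) +
        padicValNat p (Nat.factorial (qm p m c)) := by
      rw [hD, padicValNat.mul (by positivity) (Nat.factorial_ne_zero _),
        padicValNat.mul (by positivity) (Nat.factorial_ne_zero _),
        padicValNat.mul (by positivity) (Nat.factorial_ne_zero _)]
    rw [e1, e2]
    exact key_ineq p m a b c
  -- the scalar
  have hnorm : ‖((Nn : ℚ_[p]) / (D : ℚ_[p]))‖ ≤ 1 := by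
    have hcast : ((Nn : ℚ_[p]) / (D : ℚ_[p])) = (((Nn : ℚ) / (D : ℚ) : ℚ) : ℚ_[p]) := by
      push_cast; ring
    have hq0 : ((Nn : ℚ) / (D : ℚ)) ≠ 0 :=
      div_ne_zero (Nat.cast_ne_zero.mpr hNn0) (Nat.cast_ne_zero.mpr hD0)
    rw [hcast, Padic.eq_padicNorm, padicNorm.eq_zpow_of_nonzero hq0]
    have hv : (0 : ℤ) ≤ padicValRat p ((Nn : ℚ) / (D : ℚ)) := by
      rw [padicValRat.div (Nat.cast_ne_zero.mpr hNn0) (Nat.cast_ne_zero.mpr hD0),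
        padicValRat.of_nat, padicValRat.of_nat, sub_nonneg]
      exact_mod_cast hval
    have h1 : ((p : ℚ)) ^ (-padicValRat p ((Nn : ℚ) / (D : ℚ))) ≤ 1 :=
      zpow_le_one_of_nonpos₀ (by exact_mod_cast hp1.le) (neg_nonpos.mpr hv)
    exact_mod_cast h1
  set z : ℤ_[p] := ⟨(Nn : ℚ_[p]) / (D : ℚ_[p]), hnorm⟩ with hz
  refine ⟨{[((0 : Fin 3), a), ((1 : Fin 3), b), ((2 : Fin 3), c)]}, fun _ => z, ?_⟩
  rw [Finset.sum_singleton]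
  show (p : ℚ_[p]) ^ (2 * m) • genM p m (a + b + c) (b + 2 * c) =
    ((Nn : ℚ_[p]) / (D : ℚ_[p])) •
      (genA p m (0, a) * (genA p m (1, b) * (genA p m (2, c) * 1)))
  simp only [genM, genA, smul_smul, mul_one, smul_mul_assoc, mul_smul_comm]
  have hpoly : ((MvPolynomial.X 0 : MvPolynomial (Fin 2) ℚ_[p]) ^ ((0 : Fin 3) : ℕ)
        * MvPolynomial.X 1) ^ a *
      (((MvPolynomial.X 0) ^ ((1 : Fin 3) : ℕ) * MvPolynomial.X 1) ^ b *
       ((MvPolynomial.X 0) ^ ((2 : Fin 3) : ℕ) * MvPolynomial.X 1) ^ c) =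
      (MvPolynomial.X 0) ^ (b + 2 * c) * (MvPolynomial.X 1) ^ (a + b + c) := by
    show ((MvPolynomial.X 0 : MvPolynomial (Fin 2) ℚ_[p]) ^ 0 * MvPolynomial.X 1) ^ a *
      (((MvPolynomial.X 0) ^ 1 * MvPolynomial.X 1) ^ b *
       ((MvPolynomial.X 0) ^ 2 * MvPolynomial.X 1) ^ c) = _
    ring
  rw [hpoly]
  congr 1
  have hfac : ∀ n : ℕ, ((n.factorial : ℚ_[p])) ≠ 0 := fun n =>
    Nat.cast_ne_zero.mpr (Nat.factorial_ne_zero n)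
  have hsc : (p : ℚ_[p]) ^ (2 * m) * cm p m (a + b + c) =
      (Nn : ℚ_[p]) / (D : ℚ_[p]) * (cm p m a * (cm p m b * cm p m c)) := by
    rw [cm, cm, cm, cm, div_mul_div_comm, div_mul_div_comm, div_mul_div_comm,
      mul_div_assoc']
    rw [div_eq_div_iff (hfac _) (by
      exact mul_ne_zero (Nat.cast_ne_zero.mpr hD0)
        (mul_ne_zero (hfac a) (mul_ne_zero (hfac b) (hfac c))))]
    rw [hNn, hD]
    push_cast
    ring
  linear_combination hsc

end AuxLemmas

theorem pow_p_mul_Mset_subset_Aset (p : ℕ) [Fact p.Prime] (m : ℕ) :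
    ∃ N : ℕ, ∀ d k : ℕ, k ≤ 2 * d →
      ((p : ℚ_[p]) ^ N • genM p m d k) ∈ Aset p m := by
  refine ⟨2 * m, fun d k hk => ?_⟩
  obtain ⟨a, b, c, rfl, rfl⟩ : ∃ a b c : ℕ, a + b + c = d ∧ b + 2 * c = k := by
    rcases le_or_gt k d with h | h
    · exact ⟨d - k, k, 0, by omega, by omega⟩
    · exact ⟨0, 2 * d - k, k - d, by omega, by omega⟩
  exact main_mem p m a b c

end
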